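/- Let β, β' ∈ (0,1) and let ψ be a nonnegative nondecreasing integrable function on (−β, β') with ∫_{−β}^{β'} ψ(t) dt ≤ 1. Then ∫_{−β}^{β'} ψ(t) log(1/|t|) dt ≤ 3 log(1/(β β')) + 2. -/

import Mathlib

open MeasureTheory Set Real

lemma aux_log_int {b : ℝ} (hb : 0 < b) (hb1 : b ≤ 1) :
    IntegrableOn Real.log (Set.Ioo 0 b) := by
  have hrpow : IntegrableOn (fun x : ℝ => 2 * x ^ (-(1:ℝ)/2)) (Set.Ioo 0 b) := by
    have h1 : IntervalIntegrable (fun x : ℝ => x ^ (-(1:ℝ)/2)) volume 0 b :=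
      intervalIntegral.intervalIntegrable_rpow' (by norm_num)
    have h2 : IntegrableOn (fun x : ℝ => x ^ (-(1:ℝ)/2)) (Set.Ioc 0 b) :=
      (intervalIntegrable_iff_integrableOn_Ioc_of_le hb.le).mp h1
    exact ((h2.mono_set Set.Ioo_subset_Ioc_self).const_mul 2)
  refine MeasureTheory.Integrable.mono hrpow Real.measurable_log.aestronglyMeasurable ?_
  filter_upwards [ae_restrict_mem measurableSet_Ioo] with x hx
  have hx0 : 0 < x := hx.1
  have hx1 : x < 1 := lt_of_lt_of_le hx.2 hb1
  have hlog_neg : Real.log x ≤ 0 := Real.log_nonpos hx0.le hx1.le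
  have hp : (0:ℝ) < x ^ (-(1:ℝ)/2) := Real.rpow_pos_of_pos hx0 _
  have key : -Real.log x ≤ 2 * x ^ (-(1:ℝ)/2) := by
    have h3 : Real.log (x ^ (-(1:ℝ)/2)) = (-(1:ℝ)/2) * Real.log x := Real.log_rpow hx0 _
    have h4 : Real.log (x ^ (-(1:ℝ)/2)) ≤ x ^ (-(1:ℝ)/2) - 1 := Real.log_le_sub_one_of_pos hp
    nlinarith
  rw [Real.norm_eq_abs, Real.norm_eq_abs, abs_of_nonpos hlog_neg, abs_of_nonneg (by positivity)]
  exact key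

lemma aux_log_val {b : ℝ} (hb : 0 < b) (hb1 : b ≤ 1) :
    ∫ x in Set.Ioo 0 b, Real.log x = b * Real.log b - b := by
  have hint := aux_log_int hb hb1
  set s : ℕ → Set ℝ := fun n => Set.Ioc (b / (n + 2)) b with hs
  have hsm : ∀ n, MeasurableSet (s n) := fun n => measurableSet_Ioc
  have hmono : Monotone s := by
    intro m n hmn
    apply Set.Ioc_subset_Ioc_left
    apply div_le_div_of_nonneg_left hb.le (by positivity)
    have : (m:ℝ) ≤ n := Nat.cast_le.mpr hmn
    linarith
  have hunion : (⋃ n, s n) = Set.Ioc 0 b := by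
    ext x
    simp only [Set.mem_iUnion, Set.mem_Ioc]
    constructor
    · rintro ⟨n, h1, h2⟩
      exact ⟨lt_trans (by positivity) h1, h2⟩
    · rintro ⟨h1, h2⟩
      obtain ⟨n, hn⟩ := exists_nat_gt (b / x)
      refine ⟨n, ?_, h2⟩
      rw [div_lt_iff₀ (by positivity)]
      rw [div_lt_iff₀ h1] at hn
      nlinarith [h1, hn]
  have hint' : IntegrableOn Real.log (⋃ n, s n) := by
    rw [hunion]
    exact (integrableOn_Ioc_iff_integrableOn_Ioo).mpr hint
  have htend := tendsto_setIntegral_of_monotone hsm hmono hint'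
  rw [hunion] at htend
  have heval : ∀ n : ℕ, ∫ x in s n, Real.log x
      = b * Real.log b - (b / (n+2)) * Real.log (b / (n+2)) - b + b / (n+2) := by
    intro n
    have hpos : (0:ℝ) < b / (n + 2) := by positivity
    have hle : b / (n+2) ≤ b := by
      rw [div_le_iff₀ (by positivity)]
      nlinarith
    rw [← intervalIntegral.integral_of_le hle, integral_log]
  have htend2 : Filter.Tendsto (fun n : ℕ => ∫ x in s n, Real.log x) Filter.atTop
      (nhds (b * Real.log b - 0 - b + 0)) := by
    simp_rw [heval]
    have haux : Filter.Tendsto (fun n : ℕ => b / (n+2)) Filter.atTop (nhds 0) := by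
      apply Filter.Tendsto.div_atTop (tendsto_const_nhds)
      exact Filter.tendsto_atTop_add_const_right _ 2 (tendsto_natCast_atTop_atTop)
    have hlg : Filter.Tendsto (fun n : ℕ => (b / (n+2)) * Real.log (b / (n+2)))
        Filter.atTop (nhds 0) := by
      have h0 : Filter.Tendsto (fun x : ℝ => Real.log x * x) (nhdsWithin 0 (Set.Ioi 0)) (nhds 0) := by
        have := tendsto_log_mul_rpow_nhdsGT_zero (r := 1) zero_lt_one
        simpa using this
      have h1 : Filter.Tendsto (fun n : ℕ => b / (n+2)) Filter.atTop (nhdsWithin 0 (Set.Ioi 0)) := by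
        apply tendsto_nhdsWithin_of_tendsto_nhds_of_eventually_within _ haux
        filter_upwards with n
        exact Set.mem_Ioi.mpr (by positivity)
      simpa [mul_comm, Function.comp_def] using h0.comp h1
    have := ((tendsto_const_nhds (x := b * Real.log b)).sub hlg).sub
      (tendsto_const_nhds (x := b)) |>.add haux
    convert this using 2 with n
  have := tendsto_nhds_unique htend htend2
  rw [integral_Ioc_eq_integral_Ioo] at this
  rw [this]; ring


lemma aux_cheb {b : ℝ} (hb : 0 < b) (f g : ℝ → ℝ)
    (hf : MonotoneOn f (Set.Ioo 0 b)) (hg : AntitoneOn g (Set.Ioo 0 b))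
    (hfi : IntegrableOn f (Set.Ioo 0 b)) (hgi : IntegrableOn g (Set.Ioo 0 b))
    (hfgi : IntegrableOn (fun x => f x * g x) (Set.Ioo 0 b)) :
    b * ∫ x in Set.Ioo 0 b, f x * g x ≤
      (∫ x in Set.Ioo 0 b, f x) * ∫ x in Set.Ioo 0 b, g x := by
  set μ : Measure ℝ := volume.restrict (Set.Ioo 0 b) with hμ
  have hfinite : IsFiniteMeasure μ := by
    constructor
    rw [hμ, Measure.restrict_apply_univ]
    exact measure_Ioo_lt_top
  have hμuniv : (μ Set.univ).toReal = b := by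
    rw [hμ, Measure.restrict_apply_univ, Real.volume_Ioo]
    simp [hb.le]
  have h1 : Integrable (fun _ : ℝ => (1:ℝ)) μ := integrable_const 1
  have T1 : Integrable (fun p : ℝ × ℝ => (f p.1 * g p.1) * (1:ℝ)) (μ.prod μ) :=
    hfgi.mul_prod h1
  have T2 : Integrable (fun p : ℝ × ℝ => (1:ℝ) * (f p.2 * g p.2)) (μ.prod μ) :=
    h1.mul_prod hfgi
  have T3 : Integrable (fun p : ℝ × ℝ => f p.1 * g p.2) (μ.prod μ) := hfi.mul_prod hgi
  have T4 : Integrable (fun p : ℝ × ℝ => g p.1 * f p.2) (μ.prod μ) := hgi.mul_prod hfi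
  have hprod : μ.prod μ = (volume.prod volume).restrict ((Set.Ioo 0 b) ×ˢ (Set.Ioo 0 b)) := by
    rw [hμ, Measure.prod_restrict]
  have hmem : ∀ᵐ p ∂(μ.prod μ), p ∈ (Set.Ioo 0 b) ×ˢ (Set.Ioo 0 b) := by
    rw [hprod]
    exact ae_restrict_mem (measurableSet_Ioo.prod measurableSet_Ioo)
  have hle : (∀ᵐ p ∂(μ.prod μ),
      (fun p : ℝ × ℝ => (f p.1 * g p.1) * (1:ℝ) + (1:ℝ) * (f p.2 * g p.2)) p ≤
      (fun p : ℝ × ℝ => f p.1 * g p.2 + g p.1 * f p.2) p) := by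
    filter_upwards [hmem] with p hp
    obtain ⟨h1', h2'⟩ := hp
    simp only [one_mul, mul_one]
    rcases le_total p.1 p.2 with hc | hc
    · have e1 := hf h1' h2' hc
      have e2 := hg h1' h2' hc
      nlinarith
    · have e1 := hf h2' h1' hc
      have e2 := hg h2' h1' hc
      nlinarith
  have key := integral_mono_ae (T1.add T2) (T3.add T4) hle
  simp only [Pi.add_apply] at key
  rw [integral_add T1 T2, integral_add T3 T4] at key
  rw [integral_prod_mul, integral_prod_mul] at key
  have e1 : ∫ (a : ℝ × ℝ), f a.1 * g a.1 * 1 ∂μ.prod μ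
      = (∫ x, f x * g x ∂μ) * ∫ _x, (1:ℝ) ∂μ :=
    integral_prod_mul (fun x => f x * g x) (fun _ => (1:ℝ))
  have e2 : ∫ (a : ℝ × ℝ), 1 * (f a.2 * g a.2) ∂μ.prod μ
      = (∫ _x, (1:ℝ) ∂μ) * ∫ x, f x * g x ∂μ :=
    integral_prod_mul (fun _ => (1:ℝ)) (fun x => f x * g x)
  rw [e1, e2, integral_const] at key
  simp only [smul_eq_mul, measureReal_def, hμuniv] at key
  nlinarith [key]

set_option maxHeartbeats 1000000 in
theorem stmt18 (β β' : ℝ) (hβ : β ∈ Set.Ioo (0 : ℝ) 1) (hβ' : β' ∈ Set.Ioo (0 : ℝ) 1)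
    (ψ : ℝ → ℝ) (hnn : ∀ t ∈ Set.Ioo (-β) β', 0 ≤ ψ t)
    (hmono : MonotoneOn ψ (Set.Ioo (-β) β'))
    (hint : IntegrableOn ψ (Set.Ioo (-β) β'))
    (hmass : (∫ t in Set.Ioo (-β) β', ψ t) ≤ 1) :
    (∫ t in Set.Ioo (-β) β', ψ t * Real.log (1 / |t|)) ≤
      3 * Real.log (1 / (β * β')) + 2 := by
  obtain ⟨hβ0, hβ1⟩ := hβ
  obtain ⟨hβ'0, hβ'1⟩ := hβ'
  set c : ℝ := min β β' with hc
  have hc0 : 0 < c := lt_min hβ0 hβ'0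
  have hcβ : c ≤ β := min_le_left _ _
  have hcβ' : c ≤ β' := min_le_right _ _
  have hc1 : c < 1 := lt_of_le_of_lt hcβ hβ1
  have hnonnegae : 0 ≤ᵐ[volume.restrict (Set.Ioo (-β) β')] ψ :=
    (ae_restrict_mem measurableSet_Ioo).mono fun t ht => hnn t ht
  -- pointwise upper bound
  have hpt : ∀ t ∈ Set.Ioo (-β) β', ∀ a : ℝ, t ≤ a → a < β' → ψ t * (β' - a) ≤ 1 := by
    intro t ht a hta haβ'
    have hsub : Set.Ioo a β' ⊆ Set.Ioo (-β) β' :=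
      Set.Ioo_subset_Ioo (by linarith [ht.1]) le_rfl
    have h1 : ∫ s in Set.Ioo a β', (fun _ : ℝ => ψ t) s = ψ t * (β' - a) := by
      rw [setIntegral_const, Real.volume_real_Ioo_of_le (by linarith)]
      rw [smul_eq_mul]; ring
    have h2 : ∫ s in Set.Ioo a β', (fun _ : ℝ => ψ t) s ≤ ∫ s in Set.Ioo a β', ψ s := by
      refine setIntegral_mono_on (integrable_const _) (hint.mono_set hsub)
        measurableSet_Ioo fun s hs => ?_
      exact hmono ht ⟨by linarith [hs.1, ht.1], hs.2⟩ (by linarith [hs.1])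
    have h3 : ∫ s in Set.Ioo a β', ψ s ≤ ∫ s in Set.Ioo (-β) β', ψ s :=
      setIntegral_mono_set hint hnonnegae (HasSubset.Subset.eventuallyLE hsub)
    linarith
  have hb_neg : ∀ t ∈ Set.Ioo (-β) (0:ℝ), ψ t ≤ 1 / β' := by
    intro t ht
    have := hpt t ⟨ht.1, lt_trans ht.2 hβ'0⟩ 0 ht.2.le hβ'0
    rw [le_div_iff₀ hβ'0]
    linarith
  have hb_half : ∀ t ∈ Set.Ioo (-β) β', t ≤ β' / 2 → ψ t ≤ 2 / β' := by
    intro t ht ht2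
    have := hpt t ht (β' / 2) ht2 (by linarith)
    rw [le_div_iff₀ hβ'0]
    linarith
  -- integrability pieces
  have hψp : IntegrableOn ψ (Set.Ioo 0 β') :=
    hint.mono_set (Set.Ioo_subset_Ioo (by linarith) le_rfl)
  have hψn : IntegrableOn ψ (Set.Ioo (-β) 0) :=
    hint.mono_set (Set.Ioo_subset_Ioo le_rfl (by linarith))
  have hlogp : IntegrableOn Real.log (Set.Ioo 0 β') := aux_log_int hβ'0 hβ'1.le
  have hlogn : IntegrableOn Real.log (Set.Ioo (-β) 0) := by
    have h1 : IntervalIntegrable Real.log volume 0 β :=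
      (intervalIntegrable_iff_integrableOn_Ioc_of_le hβ0.le).mpr
        ((integrableOn_Ioc_iff_integrableOn_Ioo).mpr (aux_log_int hβ0 hβ1.le))
    have h2 := ((IntervalIntegrable.iff_comp_neg).mp h1).symm
    have h3 : IntervalIntegrable Real.log volume (-β) 0 := by
      simpa [Real.log_neg_eq_log] using h2
    exact ((intervalIntegrable_iff_integrableOn_Ioc_of_le
      (by linarith : -β ≤ (0:ℝ))).mp h3).mono_set Set.Ioo_subset_Ioc_self
  have hgmeas : Measurable fun t : ℝ => Real.log (1 / |t|) :=
    Real.measurable_log.comp (measurable_const.div measurable_abs)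
  -- integrability of the integrand on the positive part
  have hhp : IntegrableOn (fun t => ψ t * Real.log (1 / |t|)) (Set.Ioo 0 β') := by
    have hdom : IntegrableOn
        (fun t => 2 / β' * |Real.log t| + (Real.log 2 + Real.log (1 / β')) * ψ t)
        (Set.Ioo 0 β') := (hlogp.abs.const_mul _).add (hψp.const_mul _)
    refine Integrable.mono hdom
      (hψp.aestronglyMeasurable.mul hgmeas.aestronglyMeasurable) ?_
    filter_upwards [ae_restrict_mem measurableSet_Ioo] with t ht
    have ht0 : 0 < t := ht.1
    have htβ : t < β' := ht.2
    have htI : t ∈ Set.Ioo (-β) β' := ⟨by linarith, htβ⟩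
    have hψ0 : 0 ≤ ψ t := hnn t htI
    have habs : |t| = t := abs_of_pos ht0
    have hlog1 : Real.log (1 / |t|) = -Real.log t := by
      rw [habs, one_div, Real.log_inv]
    have ht1 : t < 1 := lt_trans htβ hβ'1
    have hlt0 : Real.log t ≤ 0 := Real.log_nonpos ht0.le ht1.le
    have hL2 : 0 ≤ Real.log 2 := Real.log_nonneg (by norm_num)
    have hLβ' : 0 ≤ Real.log (1 / β') :=
      Real.log_nonneg (by rw [le_div_iff₀ hβ'0]; linarith)
    have hRHSnn : 0 ≤ 2 / β' * |Real.log t| + (Real.log 2 + Real.log (1 / β')) * ψ t := by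
      have : 0 ≤ |Real.log t| := abs_nonneg _
      positivity
    rw [Real.norm_eq_abs, Real.norm_eq_abs, abs_of_nonneg hRHSnn, hlog1, abs_mul,
      abs_of_nonneg hψ0, abs_neg]
    rcases le_or_gt t (β' / 2) with hcase | hcase
    · have h1 : ψ t ≤ 2 / β' := hb_half t htI hcase
      have h2 : ψ t * |Real.log t| ≤ 2 / β' * |Real.log t| :=
        mul_le_mul_of_nonneg_right h1 (abs_nonneg _)
      nlinarith [mul_nonneg (add_nonneg hL2 hLβ') hψ0]
    · have h1 : |Real.log t| ≤ Real.log 2 + Real.log (1 / β') := by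
        rw [abs_of_nonpos hlt0]
        have : Real.log (β' / 2) ≤ Real.log t :=
          Real.log_le_log (by positivity) hcase.le
        rw [Real.log_div (by positivity) (by norm_num)] at this
        rw [one_div, Real.log_inv]
        linarith
      have h2 : ψ t * |Real.log t| ≤ ψ t * (Real.log 2 + Real.log (1 / β')) :=
        mul_le_mul_of_nonneg_left h1 hψ0
      have h3 : 0 ≤ 2 / β' * |Real.log t| := by positivity
      nlinarith
  -- integrability of the integrand on the negative part
  have hhn : IntegrableOn (fun t => ψ t * Real.log (1 / |t|)) (Set.Ioo (-β) 0) := by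
    have hdom : IntegrableOn (fun t : ℝ => 1 / β' * |Real.log t|) (Set.Ioo (-β) 0) :=
      hlogn.abs.const_mul _
    refine Integrable.mono hdom
      (hψn.aestronglyMeasurable.mul hgmeas.aestronglyMeasurable) ?_
    filter_upwards [ae_restrict_mem measurableSet_Ioo] with t ht
    have ht0 : t < 0 := ht.2
    have htI : t ∈ Set.Ioo (-β) β' := ⟨ht.1, by linarith⟩
    have hψ0 : 0 ≤ ψ t := hnn t htI
    have hψle : ψ t ≤ 1 / β' := hb_neg t ht
    have habs : |t| = -t := abs_of_neg ht0
    have hlog1 : Real.log (1 / |t|) = -Real.log t := by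
      rw [one_div, Real.log_inv, Real.log_abs]
    rw [Real.norm_eq_abs, Real.norm_eq_abs, hlog1, abs_mul, abs_of_nonneg hψ0, abs_neg,
      abs_of_nonneg (by positivity : (0:ℝ) ≤ 1 / β' * |Real.log t|)]
    exact mul_le_mul_of_nonneg_right hψle (abs_nonneg _) |>.trans
      (mul_le_mul_of_nonneg_left le_rfl (by positivity))
  have hhm : IntegrableOn (fun t => ψ t * Real.log (1 / |t|)) (Set.Ioo (-c) 0) :=
    hhn.mono_set (Set.Ioo_subset_Ioo (by linarith) le_rfl)
  have hho : IntegrableOn (fun t => ψ t * Real.log (1 / |t|)) (Set.Ioo (-β) (-c)) :=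
    hhn.mono_set (Set.Ioo_subset_Ioo le_rfl (by linarith))

  -- interval split lemmas
  have hsplit1 : (∫ t in Set.Ioo (-β) β', ψ t * Real.log (1 / |t|))
      = (∫ t in Set.Ioo (-β) 0, ψ t * Real.log (1 / |t|))
        + ∫ t in Set.Ioo 0 β', ψ t * Real.log (1 / |t|) := by
    have hdisj : Disjoint (Set.Ioo (-β) (0:ℝ)) (Set.Ioo (0:ℝ) β') := by
      rw [Set.disjoint_left]; rintro x ⟨_, h2⟩ ⟨h3, _⟩; linarith
    have hae : (Set.Ioo (-β) (0:ℝ) ∪ Set.Ioo (0:ℝ) β' : Set ℝ) =ᵐ[volume] Set.Ioo (-β) β' := by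
      rw [MeasureTheory.ae_eq_set]
      constructor
      · refine measure_mono_null ?_ measure_empty
        rintro x ⟨hx1 | hx1, hx2⟩
        · exact hx2 ⟨hx1.1, by linarith [hx1.2]⟩
        · exact hx2 ⟨by linarith [hx1.1], hx1.2⟩
      · refine measure_mono_null ?_ (measure_singleton 0)
        rintro x ⟨hx1, hx2⟩
        simp only [Set.mem_union, Set.mem_Ioo, not_or, not_and] at hx2
        have h1 := hx2.1
        have h2 := hx2.2
        simp only [Set.mem_singleton_iff]
        by_contra hne
        rcases lt_or_gt_of_ne hne with hlt | hgt
        · exact absurd (h1 hx1.1) (by simpa using hlt)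
        · exact absurd (h2 hgt) (by simpa using hx1.2)
    rw [← setIntegral_congr_set hae, setIntegral_union hdisj measurableSet_Ioo hhn hhp]
  have hsplit2 : (∫ t in Set.Ioo (-β) 0, ψ t * Real.log (1 / |t|))
      = (∫ t in Set.Ioo (-β) (-c), ψ t * Real.log (1 / |t|))
        + ∫ t in Set.Ioo (-c) 0, ψ t * Real.log (1 / |t|) := by
    have hdisj : Disjoint (Set.Ioo (-β) (-c)) (Set.Ioo (-c) (0:ℝ)) := by
      rw [Set.disjoint_left]; rintro x ⟨_, h2⟩ ⟨h3, _⟩; linarith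
    have hae : (Set.Ioo (-β) (-c) ∪ Set.Ioo (-c) (0:ℝ) : Set ℝ) =ᵐ[volume] Set.Ioo (-β) 0 := by
      rw [MeasureTheory.ae_eq_set]
      constructor
      · refine measure_mono_null ?_ measure_empty
        rintro x ⟨hx1 | hx1, hx2⟩
        · exact hx2 ⟨hx1.1, by linarith [hx1.2, hc0]⟩
        · exact hx2 ⟨by linarith [hx1.1, hcβ], hx1.2⟩
      · refine measure_mono_null ?_ (measure_singleton (-c))
        rintro x ⟨hx1, hx2⟩
        simp only [Set.mem_union, Set.mem_Ioo, not_or, not_and] at hx2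
        simp only [Set.mem_singleton_iff]
        by_contra hne
        rcases lt_or_gt_of_ne hne with hlt | hgt
        · exact absurd (hx2.1 hx1.1) (by simpa using hlt)
        · exact absurd (hx2.2 hgt) (by simpa using hx1.2)
    rw [← setIntegral_congr_set hae, setIntegral_union hdisj measurableSet_Ioo hho hhm]
  -- bound on the far negative part
  have hIo_mass : ∫ t in Set.Ioo (-β) (-c), ψ t ≤ 1 := by
    have := setIntegral_mono_set hint hnonnegae
      (HasSubset.Subset.eventuallyLE (Set.Ioo_subset_Ioo le_rfl (by linarith : -c ≤ β')))
    linarith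
  have hLc : 0 ≤ Real.log (1/c) := Real.log_nonneg (by rw [le_div_iff₀ hc0]; linarith)
  have hA : (∫ t in Set.Ioo (-β) (-c), ψ t * Real.log (1 / |t|)) ≤ Real.log (1/c) := by
    have hψo : IntegrableOn ψ (Set.Ioo (-β) (-c)) :=
      hψn.mono_set (Set.Ioo_subset_Ioo le_rfl (by linarith))
    have h1 : (∫ t in Set.Ioo (-β) (-c), ψ t * Real.log (1 / |t|))
        ≤ ∫ t in Set.Ioo (-β) (-c), ψ t * Real.log (1/c) := by
      refine setIntegral_mono_on hho (hψo.mul_const _) measurableSet_Ioo fun t ht => ?_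
      have ht0 : t < 0 := by linarith [ht.2, hc0]
      have htI : t ∈ Set.Ioo (-β) β' := ⟨ht.1, by linarith⟩
      have hψ0 : 0 ≤ ψ t := hnn t htI
      have habs : c < |t| := by rw [abs_of_neg ht0]; linarith [ht.2]
      have hle : Real.log (1/|t|) ≤ Real.log (1/c) := by
        apply Real.log_le_log (one_div_pos.mpr (lt_trans hc0 habs))
        exact one_div_le_one_div_of_le hc0 habs.le
      exact mul_le_mul_of_nonneg_left hle hψ0
    rw [integral_mul_const] at h1
    have h2 : (∫ t in Set.Ioo (-β) (-c), ψ t) * Real.log (1/c) ≤ 1 * Real.log (1/c) :=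
      mul_le_mul_of_nonneg_right hIo_mass hLc
    linarith
  -- bound on the near negative part
  have hval_m : ∫ t in Set.Ioo (-c) 0, Real.log t = c * Real.log c - c := by
    rw [← integral_Ioc_eq_integral_Ioo,
      ← intervalIntegral.integral_of_le (by linarith : -c ≤ (0:ℝ))]
    have e : (∫ x in (-c)..(0:ℝ), Real.log x) = ∫ x in (-c)..(0:ℝ), Real.log (-x) := by
      apply intervalIntegral.integral_congr
      intro x _
      exact (Real.log_neg_eq_log x).symm
    rw [e, intervalIntegral.integral_comp_neg]
    simp only [neg_zero, neg_neg]
    rw [intervalIntegral.integral_of_le hc0.le, integral_Ioc_eq_integral_Ioo,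
      aux_log_val hc0 hc1.le]
  have hB : (∫ t in Set.Ioo (-c) 0, ψ t * Real.log (1 / |t|)) ≤ 1 + Real.log (1/c) := by
    have hlogm : IntegrableOn Real.log (Set.Ioo (-c) 0) :=
      hlogn.mono_set (Set.Ioo_subset_Ioo (by linarith) le_rfl)
    have h1 : (∫ t in Set.Ioo (-c) 0, ψ t * Real.log (1 / |t|))
        ≤ ∫ t in Set.Ioo (-c) 0, 1/β' * -Real.log t := by
      refine setIntegral_mono_on hhm ((hlogm.neg).const_mul _) measurableSet_Ioo fun t ht => ?_
      have hlog1 : Real.log (1/|t|) = -Real.log t := by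
        rw [one_div, Real.log_inv, Real.log_abs]
      have habs : |t| = -t := abs_of_neg ht.2
      have hlognn : 0 ≤ -Real.log t := by
        have h2 : Real.log |t| ≤ 0 :=
          Real.log_nonpos (abs_nonneg _) (by rw [habs]; linarith [ht.1, hc1])
        rw [Real.log_abs] at h2
        linarith
      rw [hlog1]
      exact mul_le_mul (hb_neg t ⟨by linarith [ht.1, hcβ], ht.2⟩) le_rfl hlognn (by positivity)
    have h2 : ∫ t in Set.Ioo (-c) 0, 1/β' * -Real.log t = 1/β' * (c - c * Real.log c) := by
      rw [integral_const_mul, integral_neg, hval_m]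
      ring
    have hlogc : Real.log c ≤ 0 := Real.log_nonpos hc0.le hc1.le
    have e : Real.log (1/c) = -Real.log c := by rw [one_div, Real.log_inv]
    have h4 : c * (1 - Real.log c) ≤ β' * (1 - Real.log c) :=
      mul_le_mul_of_nonneg_right hcβ' (by linarith)
    have h5 : 1/β' * (c - c * Real.log c) ≤ 1/β' * (β' * (1 - Real.log c)) :=
      mul_le_mul_of_nonneg_left (by nlinarith) (by positivity)
    have h6 : 1/β' * (β' * (1 - Real.log c)) = 1 - Real.log c := by
      field_simp
    rw [e]
    linarith
  -- positive part via the Chebyshev correlation inequality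
  have hPos : (∫ t in Set.Ioo 0 β', ψ t * Real.log (1 / |t|)) ≤ 1 + Real.log (1/β') := by
    set w : ℝ → ℝ := fun t => (Real.log β' - 1) - Real.log t with hw
    have hwint : IntegrableOn w (Set.Ioo 0 β') := (integrable_const _).sub hlogp
    have hμβ' : (volume (Set.Ioo (0:ℝ) β')).toReal = β' := by
      rw [Real.volume_Ioo, ENNReal.toReal_ofReal (by linarith)]
      ring
    have hwval : ∫ t in Set.Ioo 0 β', w t = 0 := by
      rw [hw]
      rw [integral_sub (integrable_const _) hlogp, setIntegral_const,
        aux_log_val hβ'0 hβ'1.le, measureReal_def, hμβ', smul_eq_mul]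
      ring
    have hmono' : MonotoneOn ψ (Set.Ioo 0 β') :=
      hmono.mono (Set.Ioo_subset_Ioo (by linarith) le_rfl)
    have hanti : AntitoneOn w (Set.Ioo 0 β') := by
      intro x hx y hy hxy
      have := Real.log_le_log hx.1 hxy
      simp only [hw]
      linarith
    have hptw : ∀ t ∈ Set.Ioo (0:ℝ) β',
        ψ t * w t = ψ t * (Real.log β' - 1) + ψ t * Real.log (1 / |t|) := by
      intro t ht
      have : Real.log (1/|t|) = -Real.log t := by
        rw [one_div, Real.log_inv, Real.log_abs]
      rw [this, hw]
      ring
    have hfgi : IntegrableOn (fun x => ψ x * w x) (Set.Ioo 0 β') := by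
      have base : IntegrableOn
          (fun t => ψ t * (Real.log β' - 1) + ψ t * Real.log (1 / |t|)) (Set.Ioo 0 β') :=
        (hψp.mul_const _).add hhp
      refine Integrable.congr base ?_
      filter_upwards [ae_restrict_mem measurableSet_Ioo] with t ht
      exact (hptw t ht).symm
    have key := aux_cheb hβ'0 ψ w hmono' hanti hψp hwint hfgi
    rw [hwval, mul_zero] at key
    have hψwnp : ∫ t in Set.Ioo 0 β', ψ t * w t ≤ 0 := by nlinarith
    have hsum : ∫ t in Set.Ioo 0 β', ψ t * w t
        = (∫ t in Set.Ioo 0 β', ψ t) * (Real.log β' - 1)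
          + ∫ t in Set.Ioo 0 β', ψ t * Real.log (1 / |t|) := by
      rw [setIntegral_congr_fun measurableSet_Ioo hptw,
        integral_add (hψp.mul_const _) hhp, integral_mul_const]
    have hmp0 : 0 ≤ ∫ t in Set.Ioo 0 β', ψ t :=
      setIntegral_nonneg measurableSet_Ioo fun t ht => hnn t ⟨by linarith [ht.1], ht.2⟩
    have hmp1 : ∫ t in Set.Ioo 0 β', ψ t ≤ 1 := by
      have := setIntegral_mono_set hint hnonnegae
        (HasSubset.Subset.eventuallyLE (Set.Ioo_subset_Ioo (by linarith : -β ≤ (0:ℝ)) le_rfl))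
      linarith
    have hlogβ' : Real.log β' ≤ 0 := Real.log_nonpos hβ'0.le hβ'1.le
    have e : Real.log (1/β') = -Real.log β' := by rw [one_div, Real.log_inv]
    have h7 : (∫ t in Set.Ioo 0 β', ψ t) * (1 - Real.log β') ≤ 1 * (1 - Real.log β') :=
      mul_le_mul_of_nonneg_right hmp1 (by linarith)
    have h8 : (∫ t in Set.Ioo 0 β', ψ t) * (Real.log β' - 1)
        = -((∫ t in Set.Ioo 0 β', ψ t) * (1 - Real.log β')) := by ring
    rw [e]
    linarith [hsum, hψwnp, h7, h8]
  -- final arithmetic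
  rw [hsplit1, hsplit2]
  have hβne : β ≠ 0 := ne_of_gt hβ0
  have hβ'ne : β' ≠ 0 := ne_of_gt hβ'0
  have e1 : Real.log (1/(β*β')) = -(Real.log β + Real.log β') := by
    rw [one_div, Real.log_inv, Real.log_mul hβne hβ'ne]
  have e2 : Real.log (1/c) = -Real.log c := by rw [one_div, Real.log_inv]
  have e3 : Real.log (1/β') = -Real.log β' := by rw [one_div, Real.log_inv]
  have hcb : Real.log β + Real.log β' ≤ Real.log c := by
    rw [← Real.log_mul hβne hβ'ne]
    exact Real.log_le_log (by positivity) (le_min (by nlinarith) (by nlinarith))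
  have hlogβ : Real.log β ≤ 0 := Real.log_nonpos hβ0.le hβ1.le
  have hβ'b : Real.log β + Real.log β' ≤ Real.log β' := by linarith
  rw [e1]
  rw [e2] at hA hB
  rw [e3] at hPos
  linarith [hA, hB, hPos]
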